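/- arXiv:1509.05660 — 10 statements merged into one kernel-verified Lean document; each statement's English description precedes it below -/
import Mathlib

section
/- If G(∘) and G(∗) are two group operations on a finite set G of size n, and a∘b ≠ a∗b for some a,b ∈ G, then dist_a + dist_b + dist_{a∘b} ≥ n, where dist_x denotes the number of elements y ∈ G with x∘y ≠ x∗y. -/
/-- The multiplication of a group structure `S` on the set `G`. -/
def mulOf {G : Type*} (S : Group G) : G → G → G := fun a b => letI := S; a * b

/-- `dist_a(∘,∗)`: the number of `b` with `a∘b ≠ a∗b`. -/
def rowDist {G : Type*} [Fintype G] [DecidableEq G] (S T : Group G) (a : G) : ℕ :=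
  (Finset.univ.filter fun b => mulOf S a b ≠ mulOf T a b).card

/-- `dist(∘,∗)`: the number of pairs `(a,b)` with `a∘b ≠ a∗b`. -/
def tableDist {G : Type*} [Fintype G] [DecidableEq G] (S T : Group G) : ℕ :=
  (Finset.univ.filter fun p : G × G => mulOf S p.1 p.2 ≠ mulOf T p.1 p.2).card

lemma mulOf_assoc {G : Type*} (S : Group G) (a b c : G) :
    mulOf S (mulOf S a b) c = mulOf S a (mulOf S b c) := by
  letI := S; exact mul_assoc a b c

lemma mulOf_left_cancel {G : Type*} (S : Group G) {a b c : G}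
    (h : mulOf S a b = mulOf S a c) : b = c := by
  letI := S; exact mul_left_cancel h

lemma mulOf_right_cancel {G : Type*} (S : Group G) {a b c : G}
    (h : mulOf S a c = mulOf S b c) : a = b := by
  letI := S; exact mul_right_cancel h

theorem dist_triple {G : Type*} [Fintype G] [DecidableEq G] (S T : Group G) (a b : G)
    (h : mulOf S a b ≠ mulOf T a b) :
    Fintype.card G ≤ rowDist S T a + rowDist S T b + rowDist S T (mulOf S a b) := by
  set A : Finset G := Finset.univ.filter fun y => mulOf S a y ≠ mulOf T a y with hA
  set B : Finset G := Finset.univ.filter fun y => mulOf S b y ≠ mulOf T b y with hB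
  set C : Finset G := Finset.univ.filter
    (fun y => mulOf S (mulOf S a b) y ≠ mulOf T (mulOf S a b) y) with hC
  set A' : Finset G := Finset.univ.filter
    (fun c => mulOf S a (mulOf S b c) ≠ mulOf T a (mulOf S b c)) with hA'
  have cover : (Finset.univ : Finset G) ⊆ A' ∪ B ∪ C := by
    intro c _
    by_contra hc
    simp only [Finset.mem_union, hA', hB, hC, Finset.mem_filter, Finset.mem_univ, true_and,
      not_or, not_not] at hc
    obtain ⟨⟨h1, h2⟩, h3⟩ := hc
    have key : mulOf T (mulOf S a b) c = mulOf T (mulOf T a b) c := by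
      rw [← h3, mulOf_assoc S, h1, h2, ← mulOf_assoc T]
    exact h (mulOf_right_cancel T key)
  have hcard : Fintype.card G ≤ A'.card + B.card + C.card := by
    calc Fintype.card G = (Finset.univ : Finset G).card := rfl
      _ ≤ (A' ∪ B ∪ C).card := Finset.card_le_card cover
      _ ≤ (A' ∪ B).card + C.card := Finset.card_union_le _ _
      _ ≤ A'.card + B.card + C.card := by
          exact Nat.add_le_add_right (Finset.card_union_le _ _) _
  have hA'A : A'.card ≤ A.card := by
    apply Finset.card_le_card_of_injOn (fun c => mulOf S b c)
    · intro c hc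
      simp only [hA', Finset.mem_coe, Finset.mem_filter, Finset.mem_univ, true_and] at hc
      simp [hA, hc]
    · intro x _ y _ hxy
      exact mulOf_left_cancel S hxy
  have : rowDist S T a = A.card := rfl
  have : rowDist S T b = B.card := rfl
  have : rowDist S T (mulOf S a b) = C.card := rfl
  show Fintype.card G ≤ A.card + B.card + C.card
  omega
end

section
/- Let G(∘), G(∗) be group operations on a finite set G of odd cardinality n. If a ∈ G satisfies dist_a(∘,∗) > 0, then dist_a(∘,∗) ≥ 3. -/
lemma sign_mulLeft_of_odd {G : Type*} [Fintype G] [DecidableEq G] [Group G]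
    (hodd : Odd (Fintype.card G)) (a : G) :
    Equiv.Perm.sign (Equiv.mulLeft a) = 1 := by
  have hord : Odd (orderOf a) := hodd.of_dvd_nat (orderOf_dvd_card)
  have hpow : (Equiv.mulLeft a) ^ (orderOf a) = 1 := by
    rw [Equiv.pow_mulLeft, pow_orderOf_eq_one]
    ext b
    simp
  have hs : (Equiv.Perm.sign (Equiv.mulLeft a)) ^ (orderOf a) = 1 := by
    rw [← map_pow, hpow, map_one]
  rcases Int.units_eq_one_or (Equiv.Perm.sign (Equiv.mulLeft a)) with h1 | h1
  · exact h1
  · rw [h1, hord.neg_one_pow] at hs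
    exact absurd hs (by decide)

theorem rowDist_ge_three_of_odd {G : Type*} [Fintype G] [DecidableEq G] (S T : Group G)
    (hodd : Odd (Fintype.card G)) (a : G) (h : 0 < rowDist S T a) :
    3 ≤ rowDist S T a := by
  classical
  set LS : Equiv.Perm G := letI := S; Equiv.mulLeft a with hLS
  set LT : Equiv.Perm G := letI := T; Equiv.mulLeft a with hLT
  set σ : Equiv.Perm G := LS⁻¹ * LT with hσ
  have key : ∀ b : G, σ b = b ↔ mulOf T a b = mulOf S a b := by
    intro b
    rw [hσ, Equiv.Perm.mul_apply, Equiv.Perm.inv_eq_iff_eq]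
    exact Iff.rfl
  have hmem : ∀ b : G, σ b ≠ b ↔ mulOf S a b ≠ mulOf T a b := by
    intro b
    rw [not_iff_not.symm] at *
    simp only [not_not]
    rw [key b, eq_comm]
  have hcard : rowDist S T a = σ.support.card := by
    unfold rowDist
    congr 1
    ext b
    simp [Equiv.Perm.mem_support, hmem b]
  have hsign : Equiv.Perm.sign σ = 1 := by
    have hS : Equiv.Perm.sign LS = 1 := letI := S; sign_mulLeft_of_odd hodd a
    have hT : Equiv.Perm.sign LT = 1 := letI := T; sign_mulLeft_of_odd hodd a
    rw [hσ, map_mul, map_inv, hS, hT]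
    rfl
  rw [hcard] at h ⊢
  by_contra hlt
  push_neg at hlt
  have h12 : σ.support.card = 1 ∨ σ.support.card = 2 := by omega
  rcases h12 with h1 | h2
  · exact σ.card_support_ne_one h1
  · have := Equiv.Perm.card_support_eq_two.mp h2
    rw [this.sign_eq] at hsign
    exact absurd hsign (by decide)
end

section
/- Let G(∘), G(∗) be group operations on a finite set G and a ∈ G an element with dist_a(∘,∗) > 0 whose orders in G(∘) and G(∗) are equal. Then dist_a(∘,∗) ≥ 3. -/
/-- The order of `a` in the group structure `S`. -/
noncomputable def ordOf {G : Type*} (S : Group G) (a : G) : ℕ := letI := S; orderOf a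

section Aux
open Equiv Equiv.Perm Finset


lemma mem_cycleType_mulLeft {G : Type*} [Group G] [Fintype G] [DecidableEq G] (a : G)
    {n : ℕ} (hn : n ∈ (MulAction.toPermHom G G a).cycleType) :
    n = orderOf a := by
  set σ := MulAction.toPermHom G G a with hσ
  rw [cycleType_def, Multiset.mem_map] at hn
  obtain ⟨c, hc, rfl⟩ := hn
  have hcyc : c.IsCycle := (mem_cycleFactorsFinset_iff.mp hc).1
  obtain ⟨b, hb, -⟩ := hcyc
  have hb' : b ∈ c.support := by simpa [mem_support] using hb
  have hcc : c = σ.cycleOf b := cycle_is_cycleOf hb' hc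
  have hbs : b ∈ σ.support := mem_cycleFactorsFinset_support_le (Finset.mem_val.mp hc) hb'
  have hpow : ∀ (i : ℤ) (y : G), (σ ^ i) y = a ^ i * y := by
    intro i y
    rw [hσ, ← map_zpow]
    rfl
  have key : (σ.cycleOf b).support =
      (Finset.univ : Finset (Subgroup.zpowers a)).image (fun z : Subgroup.zpowers a => (z : G) * b) := by
    ext y
    simp only [mem_support_cycleOf_iff, Finset.mem_image, Finset.mem_univ, true_and]
    constructor
    · rintro ⟨⟨i, hi⟩, -⟩
      refine ⟨⟨a ^ i, ⟨i, rfl⟩⟩, ?_⟩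
      rw [← hpow]; exact hi
    · rintro ⟨⟨z, i, rfl⟩, rfl⟩
      refine ⟨⟨i, ?_⟩, hbs⟩
      exact hpow i b
  have hinj : Function.Injective (fun z : Subgroup.zpowers a => (z : G) * b) := by
    intro x y hxy
    exact Subtype.ext (mul_right_cancel hxy)
  show (c.support).card = orderOf a
  rw [hcc, key, Finset.card_image_of_injective _ hinj, Finset.card_univ,
    Fintype.card_zpowers]

lemma sign_toPerm_eq {G : Type*} [Group G] [Fintype G] [DecidableEq G] (a : G) (ha : a ≠ 1) :
    Equiv.Perm.sign (MulAction.toPermHom G G a) =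
      (-1 : ℤˣ) ^ (Fintype.card G + Fintype.card G / orderOf a) := by
  set σ := MulAction.toPermHom G G a with hσ
  have hrep : σ.cycleType = Multiset.replicate (Multiset.card σ.cycleType) (orderOf a) :=
    Multiset.eq_replicate_card.mpr fun x hx => mem_cycleType_mulLeft a hx
  have hsupp : σ.support = Finset.univ := by
    ext b
    simp only [mem_support, Finset.mem_univ, iff_true]
    show a • b ≠ b
    simp [smul_eq_mul, ha]
  have hsum : σ.cycleType.sum = Fintype.card G := by
    rw [sum_cycleType, hsupp, Finset.card_univ]
  have hmul : Multiset.card σ.cycleType * orderOf a = Fintype.card G := by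
    rw [← hsum]
    conv_rhs => rw [hrep]
    rw [Multiset.sum_replicate, smul_eq_mul]
  have hcard : Multiset.card σ.cycleType = Fintype.card G / orderOf a := by
    rw [← hmul, Nat.mul_div_cancel _ (orderOf_pos a)]
  rw [sign_of_cycleType, hsum, hcard]

private theorem aux_main {G : Type*} [Fintype G] [DecidableEq G]
    (S T : Group G) (a : G) (h : 0 < (Finset.univ.filter fun b =>
      (letI := S; a * b) ≠ (letI := T; a * b)).card)
    (hord : (letI := S; orderOf a) = (letI := T; orderOf a)) :
    3 ≤ (Finset.univ.filter fun b =>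
      (letI := S; a * b) ≠ (letI := T; a * b)).card := by
  set σ : Equiv.Perm G := (letI := S; MulAction.toPermHom G G a) with hσ
  set τ : Equiv.Perm G := (letI := T; MulAction.toPermHom G G a) with hτ
  have hσa : ∀ b, σ b = (letI := S; a * b) := fun b => rfl
  have hτa : ∀ b, τ b = (letI := T; a * b) := fun b => rfl
  set β : Equiv.Perm G := σ⁻¹ * τ with hβ
  have hsupp : β.support = Finset.univ.filter fun b =>
      (letI := S; a * b) ≠ (letI := T; a * b) := by
    ext b
    simp only [Equiv.Perm.mem_support, Finset.mem_filter, Finset.mem_univ, true_and]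
    rw [← hσa, ← hτa]
    constructor
    · intro hb hc
      exact hb (by simp [hβ, Equiv.Perm.mul_apply, ← hc])
    · intro hc hb
      apply hc
      have := congrArg σ hb
      simpa [hβ, Equiv.Perm.mul_apply] using this.symm
  -- a ≠ 1 in S
  have hane : (letI := S; orderOf a) ≠ 1 := by
    intro h1
    have haS : (letI := S; a = (1 : G)) := by
      letI := S; exact orderOf_eq_one_iff.mp h1
    have haT : (letI := T; a = (1 : G)) := by
      letI := T; exact orderOf_eq_one_iff.mp (hord ▸ h1)
    have : (Finset.univ.filter fun b =>
        (letI := S; a * b) ≠ (letI := T; a * b)).card = 0 := by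
      rw [Finset.card_eq_zero, Finset.filter_eq_empty_iff]
      intro b _
      simp only [ne_eq, not_not]
      calc (letI := S; a * b) = b := by rw [haS]; exact (letI := S; one_mul b)
        _ = (letI := T; a * b) := by rw [haT]; exact (letI := T; (one_mul b).symm)
    omega
  have hsignσ : Equiv.Perm.sign σ =
      (-1 : ℤˣ) ^ (Fintype.card G + Fintype.card G / (letI := S; orderOf a)) := by
    letI := S
    exact sign_toPerm_eq a (fun h1 => hane (by rw [h1, orderOf_one]))
  have hsignτ : Equiv.Perm.sign τ =
      (-1 : ℤˣ) ^ (Fintype.card G + Fintype.card G / (letI := T; orderOf a)) := by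
    letI := T
    refine sign_toPerm_eq a (fun h1 => hane ?_)
    rw [hord, h1, orderOf_one]
  have hsignβ : Equiv.Perm.sign β = 1 := by
    rw [hβ, map_mul, map_inv, hsignσ, hsignτ, hord]
    group
  have hne2 : β.support.card ≠ 2 := by
    intro h2
    have : Equiv.Perm.sign β = -1 :=
      (Equiv.Perm.card_support_eq_two.mp h2).sign_eq
    rw [hsignβ] at this
    exact absurd this (by decide)
  have hne1 : β.support.card ≠ 1 := Equiv.Perm.card_support_ne_one β
  rw [← hsupp]
  rw [← hsupp] at h
  omega

end Aux

theorem rowDist_ge_three_of_order_matched {G : Type*} [Fintype G] [DecidableEq G]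
    (S T : Group G) (a : G) (h : 0 < rowDist S T a)
    (hord : ordOf S a = ordOf T a) :
    3 ≤ rowDist S T a :=
  aux_main S T a h hord
end

section
/- Let G(∘), G(∗) be group operations on a finite set G of size n, and let a ∈ G have order σ in G(∘) and order τ in G(∗) with σ > τ. Then dist_a(∘,∗) ≥ (n/σ)·⌈σ/τ⌉, and in particular dist_a(∘,∗) ≥ n/τ. -/
lemma aux_iterate {G : Type*} (S : Group G) (a : G) (j : ℕ) (p : G) :
    (mulOf S a)^[j] p = mulOf S (letI := S; a ^ j) p := by
  letI := S
  induction j with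
  | zero => simp [mulOf]
  | succ n ih =>
      rw [Function.iterate_succ_apply', ih]
      show a * (a ^ n * p) = a ^ (n + 1) * p
      rw [pow_succ', mul_assoc]

lemma aux_id {G : Type*} [Fintype G] (S : Group G) (a : G) (p : G) :
    (mulOf S a)^[ordOf S a] p = p := by
  letI := S
  rw [aux_iterate]
  show a ^ orderOf a * p = p
  rw [pow_orderOf_eq_one, one_mul]

lemma window {G : Type*} [Fintype G] (S T : Group G) (a : G)
    (hlt : ordOf T a < ordOf S a) (p : G) :
    ∃ j < ordOf T a,
      mulOf S a ((mulOf S a)^[j] p) ≠ mulOf T a ((mulOf S a)^[j] p) := by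
  by_contra h
  push_neg at h
  have key : ∀ j ≤ ordOf T a, (mulOf S a)^[j] p = (mulOf T a)^[j] p := by
    intro j hj
    induction j with
    | zero => rfl
    | succ n ih =>
        rw [Function.iterate_succ_apply', Function.iterate_succ_apply',
          h n (lt_of_lt_of_le (Nat.lt_succ_self n) hj),
          ih (le_trans (Nat.le_succ n) hj)]
  have h1 : (mulOf S a)^[ordOf T a] p = p := by
    rw [key (ordOf T a) le_rfl, aux_id]
  rw [aux_iterate] at h1
  letI := S
  have h2 : a ^ ordOf T a * p = p := h1
  have h3 : a ^ ordOf T a = 1 := by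
    have := mul_right_cancel (h2.trans (one_mul p).symm)
    exact this
  have h4 : orderOf a ∣ ordOf T a := orderOf_dvd_of_pow_eq_one h3
  have hτpos : 0 < ordOf T a := by
    letI := T
    exact (orderOf_pos a : 0 < ordOf T a)
  exact absurd (Nat.le_of_dvd hτpos h4) (not_le.mpr hlt)

lemma orbit_count {G : Type*} [Fintype G] [DecidableEq G] (S T : Group G) (a : G)
    (hlt : ordOf T a < ordOf S a) (C : Finset G) (hC : ∀ p ∈ C, mulOf S a p ∈ C) :
    C.card ≤ ordOf T a *
      (C.filter fun b => mulOf S a b ≠ mulOf T a b).card := by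
  classical
  set τ := ordOf T a
  set f := mulOf S a with hf
  set D := C.filter fun b => mulOf S a b ≠ mulOf T a b with hD
  have hfinj : Function.Injective f := by
    intro x y hxy
    letI := S
    exact mul_left_cancel (hxy : a * x = a * y)
  have hCiter : ∀ j p, p ∈ C → f^[j] p ∈ C := by
    intro j
    induction j with
    | zero => intro p hp; exact hp
    | succ n ih =>
        intro p hp
        rw [Function.iterate_succ_apply']
        exact hC _ (ih p hp)
  have cover : C ⊆ (Finset.range τ).biUnion
      (fun j => C.filter fun p => f^[j] p ∈ D) := by
    intro p hp
    obtain ⟨j, hj, hne⟩ := window S T a hlt p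
    refine Finset.mem_biUnion.mpr ⟨j, Finset.mem_range.mpr hj, ?_⟩
    refine Finset.mem_filter.mpr ⟨hp, ?_⟩
    exact Finset.mem_filter.mpr ⟨hCiter j p hp, hne⟩
  calc C.card ≤ ((Finset.range τ).biUnion
      (fun j => C.filter fun p => f^[j] p ∈ D)).card := Finset.card_le_card cover
    _ ≤ ∑ j ∈ Finset.range τ, (C.filter fun p => f^[j] p ∈ D).card :=
        Finset.card_biUnion_le
    _ ≤ ∑ _j ∈ Finset.range τ, D.card := by
        refine Finset.sum_le_sum fun j _ => ?_
        refine Finset.card_le_card_of_injOn (f^[j]) ?_ ?_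
        · intro p hp
          exact (Finset.mem_filter.mp hp).2
        · exact Function.Injective.injOn (hfinj.iterate j)
    _ = τ * D.card := by rw [Finset.sum_const, Finset.card_range, smul_eq_mul]

theorem rowDist_order_mismatched {G : Type*} [Fintype G] [DecidableEq G]
    (S T : Group G) (a : G) (σ τ : ℕ)
    (hσ : ordOf S a = σ) (hτ : ordOf T a = τ) (hlt : τ < σ) :
    (Fintype.card G / σ) * ((σ + τ - 1) / τ) ≤ rowDist S T a ∧
    Fintype.card G / τ ≤ rowDist S T a := by
  classical
  subst hσ hτ
  letI := S
  set σ := ordOf S a with hσ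
  set τ := ordOf T a with hτ
  have hσpos : 0 < σ := (orderOf_pos a : 0 < orderOf a)
  have hτpos : 0 < τ := by
    letI := T
    exact (orderOf_pos a : 0 < ordOf T a)
  set n := Fintype.card G with hn
  set H := Subgroup.zpowers a with hH
  set q : G → Quotient (MulAction.orbitRel H G) := Quotient.mk'' with hq
  set D := Finset.univ.filter (fun b => mulOf S a b ≠ mulOf T a b) with hD
  have hrow : rowDist S T a = D.card := rfl
  have hqmul : ∀ p : G, q (mulOf S a p) = q p := by
    intro p
    refine Quotient.sound' ?_
    rw [MulAction.orbitRel_apply]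
    exact ⟨⟨a, Subgroup.mem_zpowers a⟩, rfl⟩
  have hfib : ∀ x, (Finset.univ.filter fun b => q b = x).card = σ := by
    intro x
    obtain ⟨b, hb⟩ := Quotient.exists_rep x
    have himg : (Finset.univ.filter fun g => q g = x) =
        Finset.univ.image (fun h : H => (h : G) * b) := by
      ext g
      simp only [Finset.mem_filter, Finset.mem_univ, true_and, Finset.mem_image]
      constructor
      · intro hg
        have hqq : q g = q b := by rw [hg, ← hb]
        have hrel := Quotient.eq''.mp hqq
        rw [MulAction.orbitRel_apply] at hrel
        obtain ⟨h, hh⟩ := MulAction.mem_orbit_iff.mp hrel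
        exact ⟨h, hh⟩
      · rintro ⟨h, rfl⟩
        rw [← hb]
        refine Quotient.sound' ?_
        rw [MulAction.orbitRel_apply]
        exact ⟨h, rfl⟩
    rw [himg, Finset.card_image_of_injective _ ?inj, Finset.card_univ]
    case inj =>
      intro h1 h2 hh
      exact Subtype.ext (mul_right_cancel hh)
    rw [Fintype.card_eq_nat_card, hH, Nat.card_zpowers]
    rfl
  have hcardD : D.card = ∑ x, (D.filter fun b => q b = x).card :=
    Finset.card_eq_sum_card_fiberwise (fun b _ => Finset.mem_univ (q b))
  have hcardn : n = ∑ x, (Finset.univ.filter fun b => q b = x).card :=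
    Finset.card_eq_sum_card_fiberwise (fun b _ => Finset.mem_univ (q b))
  have key : ∀ x, σ ≤ τ * (D.filter fun b => q b = x).card := by
    intro x
    have hc := orbit_count S T a hlt (Finset.univ.filter fun b => q b = x) ?_
    · rw [hfib x] at hc
      rw [Finset.filter_comm] at hc
      exact hc
    · intro p hp
      simp only [Finset.mem_filter, Finset.mem_univ, true_and] at hp ⊢
      rw [hqmul, hp]
  set Q := Fintype.card (Quotient (MulAction.orbitRel H G)) with hQ
  have hnQ : n = Q * σ := by
    rw [hcardn]
    rw [Finset.sum_congr rfl (fun x _ => hfib x), Finset.sum_const, Finset.card_univ,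
      smul_eq_mul]
  clear_value σ τ
  constructor
  · have h1 : n / σ = Q := by rw [hnQ, Nat.mul_div_cancel _ hσpos]
    rw [hrow, h1, hcardD]
    have hxx : ∀ x, (σ + τ - 1) / τ ≤ (D.filter fun b => q b = x).card := by
      intro x
      have h2 := key x
      have h3 : (σ + τ - 1) / τ < (D.filter fun b => q b = x).card + 1 := by
        rw [Nat.div_lt_iff_lt_mul hτpos]
        calc σ + τ - 1 < σ + τ := Nat.sub_lt (Nat.add_pos_left hσpos τ) one_pos
          _ ≤ τ * (D.filter fun b => q b = x).card + τ := Nat.add_le_add_right h2 τ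
          _ = ((D.filter fun b => q b = x).card + 1) * τ := by ring
      exact Nat.lt_succ_iff.mp h3
    calc Q * ((σ + τ - 1) / τ)
        = ∑ _x : Quotient (MulAction.orbitRel H G), (σ + τ - 1) / τ := by
          rw [Finset.sum_const, Finset.card_univ, smul_eq_mul]
      _ ≤ ∑ x, (D.filter fun b => q b = x).card :=
          Finset.sum_le_sum fun x _ => hxx x
  · rw [hrow]
    have hn2 : n ≤ τ * D.card := by
      calc n = ∑ x, (Finset.univ.filter fun b => q b = x).card := hcardn
        _ = ∑ _x : Quotient (MulAction.orbitRel H G), σ :=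
            Finset.sum_congr rfl (fun x _ => hfib x)
        _ ≤ ∑ x, τ * (D.filter fun b => q b = x).card :=
            Finset.sum_le_sum fun x _ => key x
        _ = τ * ∑ x, (D.filter fun b => q b = x).card := by rw [Finset.mul_sum]
        _ = τ * D.card := by rw [← hcardD]
    calc n / τ ≤ τ * D.card / τ := Nat.div_le_div_right hn2
      _ = D.card := Nat.mul_div_cancel_left _ hτpos
end

section
/- Let G(∘), G(∗) be group operations on a finite set G, f : G → G a bijection, g an automorphism of G(∘) and ℓ an automorphism of G(∗). Then dist(∘_f, ∗) = dist(∘_{ℓ∘f∘g}, ∗), where ∘_f denotes the operation transported along f. -/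
/-- The distance of two binary operations. -/
def opDist {G : Type*} [Fintype G] [DecidableEq G] (m₁ m₂ : G → G → G) : ℕ :=
  (Finset.univ.filter fun p : G × G => m₁ p.1 p.2 ≠ m₂ p.1 p.2).card

/-- The row distance of two binary operations. -/
def opRowDist {G : Type*} [Fintype G] [DecidableEq G] (m₁ m₂ : G → G → G) (a : G) : ℕ :=
  (Finset.univ.filter fun b => m₁ a b ≠ m₂ a b).card

/-- The operation transported along a bijection `f`. -/
def transportOp {G : Type*} (f : G ≃ G) (m : G → G → G) : G → G → G :=
  fun a b => f (m (f.symm a) (f.symm b))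

theorem dist_transport_aut {G : Type*} [Fintype G] [DecidableEq G] (S T : Group G)
    (f g l : G ≃ G)
    (hg : ∀ a b, g (mulOf S a b) = mulOf S (g a) (g b))
    (hl : ∀ a b, l (mulOf T a b) = mulOf T (l a) (l b)) :
    opDist (transportOp f (mulOf S)) (mulOf T)
      = opDist (transportOp (g.trans (f.trans l)) (mulOf S)) (mulOf T) := by
  have key : ∀ a b, transportOp (g.trans (f.trans l)) (mulOf S) a b
      = l (transportOp f (mulOf S) (l.symm a) (l.symm b)) := by
    intro a b
    simp only [transportOp, Equiv.trans_apply, Equiv.symm_trans_apply]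
    congr 2
    have := hg (g.symm (f.symm (l.symm a))) (g.symm (f.symm (l.symm b)))
    simpa using this
  have hlsymm : ∀ a b : G, l.symm (mulOf T a b) = mulOf T (l.symm a) (l.symm b) := by
    intro a b
    have := hl (l.symm a) (l.symm b)
    simp only [Equiv.apply_symm_apply] at this
    rw [← this, Equiv.symm_apply_apply]
  unfold opDist
  refine Finset.card_bij' (fun p _ => (l p.1, l p.2)) (fun p _ => (l.symm p.1, l.symm p.2))
    ?_ ?_ ?_ ?_
  · intro p hp
    simp only [Finset.mem_filter, Finset.mem_univ, true_and] at hp ⊢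
    rw [key]
    simp only [Equiv.symm_apply_apply]
    intro h
    apply hp
    have := congrArg l.symm h
    simpa [hlsymm] using this
  · intro p hp
    simp only [Finset.mem_filter, Finset.mem_univ, true_and] at hp ⊢
    rw [key] at hp
    intro h
    apply hp
    rw [h, ← hlsymm]
    simp
  · intro p hp; simp
  · intro p hp; simp
end

section
/- Let G(∘) be a group of even order n and G(∗) another group on G with m(∘,∗) = 2, i.e., some a ∈ G satisfies dist_a(∘,∗) = 2. Then, after possibly swapping ∘ and ∗, the element a has order n in G(∘) and order n/2 in G(∗). In particular one of the two groups is cyclic. -/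
namespace MTwoAux
variable {G : Type*}

def Lact (S : Group G) (a : G) (k : ℕ) (b : G) : G := letI := S; a ^ k * b
lemma Lact_zero (S : Group G) (a b : G) : Lact S a 0 b = b := by
  letI := S; show a ^ 0 * b = b; simp
lemma Lact_one (S : Group G) (a b : G) : Lact S a 1 b = mulOf S a b := by
  letI := S; show a ^ 1 * b = a * b; rw [pow_one]
lemma Lact_succ (S : Group G) (a : G) (k : ℕ) (b : G) :
    Lact S a (k + 1) b = mulOf S a (Lact S a k b) := by
  letI := S; show a ^ (k + 1) * b = a * (a ^ k * b); rw [pow_succ', mul_assoc]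
lemma Lact_add (S : Group G) (a : G) (k l : ℕ) (b : G) :
    Lact S a (k + l) b = Lact S a k (Lact S a l b) := by
  letI := S; show a ^ (k + l) * b = a ^ k * (a ^ l * b); rw [pow_add, mul_assoc]
lemma Lact_cancel (S : Group G) (a : G) (k : ℕ) {b c : G}
    (h : Lact S a k b = Lact S a k c) : b = c := by
  letI := S; exact mul_left_cancel h
lemma mulOf_cancel (S : Group G) (a : G) {b c : G}
    (h : mulOf S a b = mulOf S a c) : b = c := by
  letI := S; exact mul_left_cancel h
lemma Lact_eq_self_iff (S : Group G) (a : G) (k : ℕ) (b : G) :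
    Lact S a k b = b ↔ ordOf S a ∣ k := by
  letI := S
  show a ^ k * b = b ↔ orderOf a ∣ k
  rw [mul_eq_right]
  exact orderOf_dvd_iff_pow_eq_one.symm
lemma ordOf_pos [Fintype G] (S : Group G) (a : G) : 0 < ordOf S a := by
  letI := S; exact orderOf_pos a
lemma ordOf_dvd_card [Fintype G] (S : Group G) (a : G) :
    ordOf S a ∣ Fintype.card G := by
  letI := S; exact orderOf_dvd_card
lemma exists_pre (S : Group G) (a g : G) : ∃ c, mulOf S a c = g := by
  letI := S; exact ⟨a⁻¹ * g, by show a * (a⁻¹ * g) = g; simp⟩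

lemma chain (S T : Group G) (a b c : G) (K : ℕ)
    (h1 : Lact T a 1 b = Lact S a 1 c)
    (hP : ∀ k, 1 ≤ k → k < K → mulOf S a (Lact S a k c) = mulOf T a (Lact S a k c)) :
    ∀ k, 1 ≤ k → k ≤ K → Lact T a k b = Lact S a k c := by
  intro k
  induction k with
  | zero => omega
  | succ k ih =>
    intro _ hK
    rcases Nat.eq_zero_or_pos k with rfl | hk
    · exact h1
    · have hkK : k < K := Nat.lt_of_succ_le hK
      have ihh := ih hk (le_of_lt hkK)
      rw [Lact_succ, Lact_succ, ihh]
      exact (hP k hk hkK).symm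

/-- If the two group structures give `a` the same order, then `rowDist S T a ≠ 2`. -/
lemma ord_ne [Fintype G] [DecidableEq G] (S T : Group G) (a : G)
    (ha : rowDist S T a = 2) : ordOf S a ≠ ordOf T a := by
  intro hστ
  set σ := ordOf S a with hσdef
  have hσpos : 0 < σ := ordOf_pos S a
  obtain ⟨x, y, hxy, hD⟩ := Finset.card_eq_two.mp ha
  have hmemD : ∀ b : G, mulOf S a b ≠ mulOf T a b ↔ (b = x ∨ b = y) := by
    intro b
    constructor
    · intro hne
      have : b ∈ Finset.univ.filter fun b => mulOf S a b ≠ mulOf T a b :=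
        Finset.mem_filter.mpr ⟨Finset.mem_univ _, hne⟩
      rw [hD] at this
      simpa using this
    · intro hb
      have : b ∈ ({x, y} : Finset G) := by simpa using hb
      rw [← hD] at this
      exact (Finset.mem_filter.mp this).2
  have hx : mulOf S a x ≠ mulOf T a x := (hmemD x).mpr (Or.inl rfl)
  have hagree : ∀ b, b ≠ x → b ≠ y → mulOf S a b = mulOf T a b := by
    intro b h1 h2
    by_contra hne
    rcases (hmemD b).mp hne with h | h <;> tauto
  -- the swap: a ∗ x = a ∘ y
  have hswap : mulOf T a x = mulOf S a y := by
    obtain ⟨c, hc⟩ := exists_pre S a (mulOf T a x)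
    have hcx : c ≠ x := by
      intro h; rw [h] at hc; exact hx hc
    rcases eq_or_ne c y with rfl | hcy
    · exact hc.symm
    · exfalso
      have := (hagree c hcx hcy).symm.trans hc
      exact hcx (mulOf_cancel T a this)
  have h1 : Lact T a 1 x = Lact S a 1 y := by
    rw [Lact_one, Lact_one]; exact hswap
  by_cases hcase : ∃ j, 0 < j ∧ j < σ ∧ Lact S a j x = y
  · -- y lies on the S-orbit of x
    obtain ⟨j, hj0, hjσ, hjxy⟩ := hcase
    set K := σ - j with hK
    have hK0 : 0 < K := by omega
    have hKσ : K < σ := by omega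
    have hP : ∀ k, 1 ≤ k → k < K → mulOf S a (Lact S a k y) = mulOf T a (Lact S a k y) := by
      intro k hk1 hkK
      apply hagree
      · intro hkx
        rw [← hjxy, ← Lact_add] at hkx
        have : σ ∣ k + j := (Lact_eq_self_iff S a _ x).mp hkx
        have := Nat.le_of_dvd (by omega) this
        omega
      · intro hky
        have : σ ∣ k := (Lact_eq_self_iff S a _ y).mp hky
        have := Nat.le_of_dvd (by omega) this
        omega
    have hchain := chain S T a x y K h1 hP K hK0 le_rfl
    have hSy : Lact S a K y = x := by
      rw [← hjxy, ← Lact_add]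
      have : K + j = σ := by omega
      rw [this]
      exact (Lact_eq_self_iff S a σ x).mpr dvd_rfl
    have hTx : Lact T a K x = x := hchain.trans hSy
    have : σ ∣ K := by
      have := (Lact_eq_self_iff T a K x).mp hTx
      rwa [← hστ] at this
    have := Nat.le_of_dvd hK0 this
    omega
  · -- y is not on the S-orbit of x
    push_neg at hcase
    have hA : ∀ i, i < σ → Lact S a i y ≠ x := by
      intro i hiσ hix
      have hi0 : 0 < i := by
        rcases Nat.eq_zero_or_pos i with rfl | h
        · rw [Lact_zero] at hix; exact absurd hix.symm hxy
        · exact h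
      have : Lact S a (σ - i) x = y := by
        rw [← hix, ← Lact_add]
        have : σ - i + i = σ := by omega
        rw [this]
        exact (Lact_eq_self_iff S a σ y).mpr dvd_rfl
      exact hcase (σ - i) (by omega) (by omega) this
    have hP : ∀ k, 1 ≤ k → k < σ → mulOf S a (Lact S a k y) = mulOf T a (Lact S a k y) := by
      intro k hk1 hkσ
      apply hagree
      · exact hA k hkσ
      · intro hky
        have : σ ∣ k := (Lact_eq_self_iff S a _ y).mp hky
        have := Nat.le_of_dvd (by omega) this
        omega
    have hchain := chain S T a x y σ h1 hP σ hσpos le_rfl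
    have hTx : Lact T a σ x = x := by
      apply (Lact_eq_self_iff T a σ x).mpr
      rw [← hστ]
    have hSy : Lact S a σ y = y := (Lact_eq_self_iff S a σ y).mpr dvd_rfl
    exact hxy (hTx.symm.trans (hchain.trans hSy))


/-- Every window of length `ordOf T a` along an `S`-orbit contains a disagreement,
provided `ordOf T a < ordOf S a`. -/
lemma window [Fintype G] (S T : Group G) (a : G)
    (hlt : ordOf T a < ordOf S a) (b : G) :
    ∃ k, k < ordOf T a ∧ mulOf S a (Lact S a k b) ≠ mulOf T a (Lact S a k b) := by
  by_contra h
  push_neg at h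
  have hpos : 0 < ordOf T a := ordOf_pos T a
  have h1 : Lact T a 1 b = Lact S a 1 b := by
    rw [Lact_one, Lact_one]
    have := h 0 hpos
    rw [Lact_zero] at this
    exact this.symm
  have heq := chain S T a b b (ordOf T a) h1 (fun k _ hk => h k hk) (ordOf T a) hpos le_rfl
  have hTb : Lact T a (ordOf T a) b = b := (Lact_eq_self_iff T a _ b).mpr dvd_rfl
  have hSb : Lact S a (ordOf T a) b = b := heq.symm.trans hTb
  have := Nat.le_of_dvd hpos ((Lact_eq_self_iff S a _ b).mp hSb)
  omega

lemma card_bound [Fintype G] [DecidableEq G] (S T : Group G) (a : G)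
    (hlt : ordOf T a < ordOf S a) :
    Fintype.card G ≤ ordOf T a * rowDist S T a := by
  classical
  set τ := ordOf T a with hτ
  set D : Finset G := Finset.univ.filter fun b => mulOf S a b ≠ mulOf T a b with hD
  have hW : ∀ b : G, ∃ k, k < τ ∧ mulOf S a (Lact S a k b) ≠ mulOf T a (Lact S a k b) :=
    window S T a hlt
  let f : G → ℕ × G := fun b => (Nat.find (hW b), Lact S a (Nat.find (hW b)) b)
  have hmem : ∀ b ∈ (Finset.univ : Finset G), f b ∈ (Finset.range τ) ×ˢ D := by
    intro b _
    obtain ⟨h1, h2⟩ := Nat.find_spec (hW b)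
    exact Finset.mem_product.mpr ⟨Finset.mem_range.mpr h1,
      Finset.mem_filter.mpr ⟨Finset.mem_univ _, h2⟩⟩
  have hinj : Set.InjOn f (Finset.univ : Finset G) := by
    intro b1 _ b2 _ hfe
    have hk : Nat.find (hW b1) = Nat.find (hW b2) := congrArg Prod.fst hfe
    have hv : Lact S a (Nat.find (hW b1)) b1 = Lact S a (Nat.find (hW b2)) b2 :=
      congrArg Prod.snd hfe
    rw [hk] at hv
    exact Lact_cancel S a _ hv
  have := Finset.card_le_card_of_injOn f hmem hinj
  simpa [rowDist, Finset.card_product, Finset.card_univ, hD, mul_comm] using this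


/-- The arithmetic conclusion when `ordOf T a < ordOf S a`. -/
lemma main_lt [Fintype G] [DecidableEq G] (S T : Group G) (a : G)
    (ha : rowDist S T a = 2) (hlt : ordOf T a < ordOf S a) :
    ordOf S a = Fintype.card G ∧ ordOf T a = Fintype.card G / 2 := by
  set n := Fintype.card G with hn
  set σ := ordOf S a with hσ
  set τ := ordOf T a with hτ
  have hτpos : 0 < τ := ordOf_pos T a
  have hτn : τ ∣ n := ordOf_dvd_card T a
  have hσn : σ ∣ n := ordOf_dvd_card S a
  have hnpos : 0 < n := by
    have : Nonempty G := letI := S; ⟨1⟩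
    exact Fintype.card_pos
  have hσlen : σ ≤ n := Nat.le_of_dvd hnpos hσn
  have hbound : n ≤ τ * 2 := by
    have := card_bound S T a hlt
    rwa [ha] at this
  obtain ⟨mτ, hmτ⟩ := hτn
  have hmτ2 : mτ = 2 := by
    have h1 : τ * mτ ≤ τ * 2 := by rw [← hmτ]; exact hbound
    have h2 : mτ ≤ 2 := Nat.le_of_mul_le_mul_left h1 hτpos
    have h3 : mτ ≠ 1 := by
      intro h; rw [h, mul_one] at hmτ; omega
    have h4 : mτ ≠ 0 := by
      intro h; rw [h, mul_zero] at hmτ; omega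
    omega
  have hn2τ : n = τ * 2 := by rw [hmτ, hmτ2]
  obtain ⟨mσ, hmσ⟩ := hσn
  have hmσ1 : mσ = 1 := by
    by_contra hne
    have h4 : mσ ≠ 0 := by
      intro h; rw [h, mul_zero] at hmσ; omega
    have h2 : 2 ≤ mσ := by omega
    have : σ * 2 ≤ σ * mσ := Nat.mul_le_mul_left σ h2
    rw [← hmσ] at this
    omega
  constructor
  · rw [hmσ, hmσ1, mul_one]
  · omega

end MTwoAux

theorem m_eq_two_orders {G : Type*} [Fintype G] [DecidableEq G] (S T : Group G)
    (hev : Even (Fintype.card G)) (a : G) (ha : rowDist S T a = 2) :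
    (ordOf S a = Fintype.card G ∧ ordOf T a = Fintype.card G / 2) ∨
    (ordOf T a = Fintype.card G ∧ ordOf S a = Fintype.card G / 2) := by
  have hsymm : rowDist T S a = 2 := by
    have hset : (Finset.univ.filter fun b => mulOf T a b ≠ mulOf S a b) =
        (Finset.univ.filter fun b => mulOf S a b ≠ mulOf T a b) := by
      ext b; simp [ne_comm]
    unfold rowDist at ha ⊢
    rw [hset]
    exact ha
  have hne := MTwoAux.ord_ne S T a ha
  rcases lt_or_gt_of_ne hne with h | h
  · right
    exact MTwoAux.main_lt T S a hsymm h
  · left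
    exact MTwoAux.main_lt S T a ha h
end

section
/- A restricted edge-colored graph on v ≥ 7 vertices with at least v edges contains a rainbow 2-matching (two disjoint edges of distinct colors); i.e., μ₂(v) = v for v ≥ 7. -/
private lemma sym2_exists_mk {V : Type*} (z : Sym2 V) : ∃ a b, z = s(a, b) := by
  induction z using Sym2.ind with
  | _ a b => exact ⟨a, b, rfl⟩

private lemma sym2_eq_of_mem_mem {V : Type*} {e : Sym2 V} {u w : V}
    (hu : u ∈ e) (hw : w ∈ e) (h : u ≠ w) : e = s(u, w) := by
  induction e using Sym2.ind with
  | _ x y =>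
    rw [Sym2.mem_iff] at hu hw
    rw [Sym2.eq_iff]
    rcases hu with rfl | rfl <;> rcases hw with rfl | rfl <;> tauto

private lemma mem_or_mem_of_meets {V : Type*} {e : Sym2 V} {a x : V}
    (h : ∃ z ∈ e, z ∈ s(a, x)) : a ∈ e ∨ x ∈ e := by
  obtain ⟨z, hz, hz'⟩ := h
  rw [Sym2.mem_iff] at hz'
  rcases hz' with rfl | rfl
  · exact Or.inl hz
  · exact Or.inr hz

private lemma star_card {V : Type*} [Fintype V] [DecidableEq V]
    (E : Finset (Sym2 V)) (a : V)
    (hloop : ∀ e ∈ E, ¬ e.IsDiag) (hstar : ∀ e ∈ E, a ∈ e) :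
    E.card ≤ Fintype.card V - 1 := by
  classical
  have h1 : E.card ≤ (Finset.univ.erase a).card := by
    apply Finset.card_le_card_of_injOn (fun e => if h : a ∈ e then Sym2.Mem.other' h else a)
    · intro e he
      have h := hstar e he
      simp only [dif_pos h]
      refine Finset.mem_erase.mpr ⟨?_, Finset.mem_univ _⟩
      rw [← Sym2.other_eq_other']
      exact Sym2.other_ne (hloop e he) h
    · intro e he f hf hef
      have h := hstar e he; have h' := hstar f hf
      simp only [dif_pos h, dif_pos h'] at hef
      rw [← Sym2.other_spec' h, ← Sym2.other_spec' h', hef]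
  simpa [Finset.card_erase_of_mem] using h1

theorem rainbow_two_matching {V C : Type*} [Fintype V] [DecidableEq V] [DecidableEq C]
    (E : Finset (Sym2 V)) (c : Sym2 V → C)
    (hloop : ∀ e ∈ E, ¬ e.IsDiag)
    (hcol : ∀ col : C, (E.filter fun e => c e = col).card ≤ 3)
    (hvert : ∀ (x : V) (col : C), (E.filter fun e => c e = col ∧ x ∈ e).card ≤ 2)
    (hv : 7 ≤ Fintype.card V)
    (hE : Fintype.card V ≤ E.card) :
    ∃ e₁ ∈ E, ∃ e₂ ∈ E, c e₁ ≠ c e₂ ∧ ∀ x ∈ e₁, x ∉ e₂ := by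
  classical
  by_contra hcon
  push_neg at hcon
  -- key: disjoint edges get the same color
  have key : ∀ e ∈ E, ∀ f ∈ E, (∀ x ∈ e, x ∉ f) → c e = c f := by
    intro e he f hf hd
    by_contra hne
    obtain ⟨z, hz, hz'⟩ := hcon e he f hf hne
    exact hd z hz hz'
  have hE7 : 7 ≤ E.card := le_trans hv hE
  -- Step 1: there exist two disjoint edges
  have hdisj : ∃ e₁ ∈ E, ∃ e₂ ∈ E, ∀ x ∈ e₁, x ∉ e₂ := by
    by_contra hnd
    push_neg at hnd
    -- hnd : every two edges intersect
    obtain ⟨e₁, he₁⟩ := Finset.card_pos.mp (by omega : 0 < E.card)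
    obtain ⟨a, b, rfl⟩ := sym2_exists_mk e₁
    have hab : a ≠ b := by
      have := hloop _ he₁; rwa [Sym2.mk_isDiag_iff] at this
    by_cases hall : ∀ e ∈ E, a ∈ e
    · have := star_card E a hloop hall
      omega
    push_neg at hall
    obtain ⟨e₂, he₂, ha₂⟩ := hall
    have hb₂ : b ∈ e₂ := by
      rcases mem_or_mem_of_meets (hnd e₂ he₂ _ he₁) with h | h
      · exact absurd h ha₂
      · exact h
    set d := (Sym2.Mem.other' hb₂) with hd_def
    have he₂eq : e₂ = s(b, d) := (Sym2.other_spec' hb₂).symm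
    have hdb : d ≠ b := by
      rw [hd_def, ← Sym2.other_eq_other']
      exact Sym2.other_ne (hloop _ he₂) hb₂
    have hda : d ≠ a := by
      intro h
      apply ha₂
      rw [← h]
      exact Sym2.other_mem' hb₂
    by_cases hall2 : ∀ e ∈ E, b ∈ e
    · have := star_card E b hloop hall2
      omega
    push_neg at hall2
    obtain ⟨e₃, he₃, hb₃⟩ := hall2
    have ha₃ : a ∈ e₃ := by
      rcases mem_or_mem_of_meets (hnd e₃ he₃ _ he₁) with h | h
      · exact h
      · exact absurd h hb₃
    have hd₃ : d ∈ e₃ := by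
      have := hnd e₃ he₃ _ he₂
      rw [he₂eq] at this
      rcases mem_or_mem_of_meets this with h | h
      · exact absurd h hb₃
      · exact h
    -- every edge is inside the triangle {a,b,d}
    have hsub : E ⊆ {s(a, b), s(b, d), s(a, d)} := by
      intro e he
      have h1 : a ∈ e ∨ b ∈ e := mem_or_mem_of_meets (hnd e he _ he₁)
      have h2 : b ∈ e ∨ d ∈ e := by
        have := hnd e he _ he₂; rw [he₂eq] at this
        exact mem_or_mem_of_meets this
      have h3 : a ∈ e ∨ d ∈ e := by
        have := hnd e he _ he₃
        rw [sym2_eq_of_mem_mem ha₃ hd₃ (Ne.symm hda)] at this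
        exact mem_or_mem_of_meets this
      simp only [Finset.mem_insert, Finset.mem_singleton]
      rcases h1 with h1 | h1
      · rcases h2 with h2 | h2
        · exact Or.inl (sym2_eq_of_mem_mem h1 h2 hab)
        · exact Or.inr (Or.inr (sym2_eq_of_mem_mem h1 h2 (Ne.symm hda)))
      · rcases h3 with h3 | h3
        · exact Or.inl (sym2_eq_of_mem_mem h3 h1 hab)
        · exact Or.inr (Or.inl (sym2_eq_of_mem_mem h1 h3 (Ne.symm hdb)))
    have : E.card ≤ 3 := by
      calc E.card ≤ ({s(a, b), s(b, d), s(a, d)} : Finset (Sym2 V)).card :=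
            Finset.card_le_card hsub
        _ ≤ 3 := by
            apply le_trans (Finset.card_insert_le _ _)
            have := Finset.card_insert_le s(b, d) ({s(a, d)} : Finset (Sym2 V))
            simp at this ⊢
            omega
    omega
  -- Step 2
  obtain ⟨e₁, he₁, e₂, he₂, hd12⟩ := hdisj
  obtain ⟨a, b, rfl⟩ := sym2_exists_mk e₁
  obtain ⟨x, y, rfl⟩ := sym2_exists_mk e₂
  have hab : a ≠ b := by have := hloop _ he₁; rwa [Sym2.mk_isDiag_iff] at this
  have hxy : x ≠ y := by have := hloop _ he₂; rwa [Sym2.mk_isDiag_iff] at this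
  have hax : a ≠ x := fun h => hd12 a (by simp) (by simp [h])
  have hay : a ≠ y := fun h => hd12 a (by simp) (by simp [h])
  have hbx : b ≠ x := fun h => hd12 b (by simp) (by simp [h])
  have hby : b ≠ y := fun h => hd12 b (by simp) (by simp [h])
  have hc12 : c s(x, y) = c s(a, b) := (key _ he₁ _ he₂ hd12).symm
  set col := c s(a, b) with hcol_def
  set colE := E.filter (fun e => c e = col) with hcolE_def
  set cross := ({s(a, x), s(a, y), s(b, x), s(b, y)} : Finset (Sym2 V)) with hcross_def
  have hcolE3 : colE.card ≤ 3 := hcol col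
  -- every non-col edge is a crossing edge
  have hsub : E \ colE ⊆ cross := by
    intro e he
    rw [Finset.mem_sdiff] at he
    obtain ⟨he, hne⟩ := he
    have hnc : c e ≠ col := by
      intro h; exact hne (Finset.mem_filter.mpr ⟨he, h⟩)
    have m1 : a ∈ e ∨ b ∈ e := by
      apply mem_or_mem_of_meets
      by_contra hd
      push_neg at hd
      exact hnc (key e he _ he₁ (by intro z hz hz'; exact (hd z hz hz').elim))
    have m2 : x ∈ e ∨ y ∈ e := by
      apply mem_or_mem_of_meets
      by_contra hd
      push_neg at hd
      have := key e he _ he₂ (by intro z hz hz'; exact (hd z hz hz').elim)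
      rw [hc12] at this
      exact hnc this
    simp only [hcross_def, Finset.mem_insert, Finset.mem_singleton]
    rcases m1 with m1 | m1 <;> rcases m2 with m2 | m2
    · exact Or.inl (sym2_eq_of_mem_mem m1 m2 hax)
    · exact Or.inr (Or.inl (sym2_eq_of_mem_mem m1 m2 hay))
    · exact Or.inr (Or.inr (Or.inl (sym2_eq_of_mem_mem m1 m2 hbx)))
    · exact Or.inr (Or.inr (Or.inr (sym2_eq_of_mem_mem m1 m2 hby)))
  have hcross4 : cross.card = 4 := by
    rw [hcross_def]
    rw [Finset.card_insert_of_notMem (by simp [Sym2.eq_iff]; tauto),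
      Finset.card_insert_of_notMem (by simp [Sym2.eq_iff]; tauto),
      Finset.card_insert_of_notMem (by simp [Sym2.eq_iff]; tauto),
      Finset.card_singleton]
  have hcolE_sub : colE ⊆ E := Finset.filter_subset _ _
  have hsd_card : (E \ colE).card = E.card - colE.card := Finset.card_sdiff_of_subset hcolE_sub
  have hsdeq : E \ colE = cross := by
    apply Finset.eq_of_subset_of_card_le hsub
    omega
  have hcolE_card : colE.card = 3 := by
    have h4 : (E \ colE).card = 4 := by rw [hsdeq]; exact hcross4
    omega
  -- get a third col-edge e₃
  have he₁col : s(a, b) ∈ colE := Finset.mem_filter.mpr ⟨he₁, rfl⟩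
  have he₂col : s(x, y) ∈ colE := Finset.mem_filter.mpr ⟨he₂, hc12⟩
  have hne12 : s(a, b) ≠ s(x, y) := by
    intro h
    exact hd12 a (by simp) (by rw [← h]; simp)
  have hpair : ({s(a, b), s(x, y)} : Finset (Sym2 V)) ⊆ colE := by
    intro e he
    rcases Finset.mem_insert.mp he with rfl | he
    · exact he₁col
    · rw [Finset.mem_singleton.mp he]; exact he₂col
  have hpair_card : ({s(a, b), s(x, y)} : Finset (Sym2 V)).card = 2 := by
    rw [Finset.card_insert_of_notMem (by simpa using hne12), Finset.card_singleton]
  have hsd_ne : (colE \ {s(a, b), s(x, y)}).Nonempty := by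
    rw [← Finset.card_pos, Finset.card_sdiff_of_subset hpair]
    omega
  obtain ⟨e₃, he₃'⟩ := hsd_ne
  rw [Finset.mem_sdiff] at he₃'
  obtain ⟨he₃col, he₃ne⟩ := he₃'
  simp only [Finset.mem_insert, Finset.mem_singleton, not_or] at he₃ne
  obtain ⟨hne₃1, hne₃2⟩ := he₃ne
  have he₃E : e₃ ∈ E := hcolE_sub he₃col
  have hc₃ : c e₃ = col := (Finset.mem_filter.mp he₃col).2
  -- e₃ meets every crossing edge
  have hmeets : ∀ f ∈ cross, ∃ z ∈ e₃, z ∈ f := by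
    intro f hf
    have hfE : f ∈ E := by
      have : f ∈ E \ colE := by rw [hsdeq]; exact hf
      exact (Finset.mem_sdiff.mp this).1
    have hfnc : c f ≠ col := by
      have : f ∈ E \ colE := by rw [hsdeq]; exact hf
      intro h
      exact (Finset.mem_sdiff.mp this).2 (Finset.mem_filter.mpr ⟨hfE, h⟩)
    by_contra hdj
    push_neg at hdj
    have := key e₃ he₃E f hfE (by intro z hz hz'; exact (hdj z hz hz').elim)
    rw [hc₃] at this
    exact hfnc this.symm
  have m1 : a ∈ e₃ ∨ x ∈ e₃ := mem_or_mem_of_meets (hmeets _ (by simp [hcross_def]))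
  have m2 : a ∈ e₃ ∨ y ∈ e₃ := mem_or_mem_of_meets (hmeets _ (by simp [hcross_def]))
  have m3 : b ∈ e₃ ∨ x ∈ e₃ := mem_or_mem_of_meets (hmeets _ (by simp [hcross_def]))
  have m4 : b ∈ e₃ ∨ y ∈ e₃ := mem_or_mem_of_meets (hmeets _ (by simp [hcross_def]))
  by_cases ha3 : a ∈ e₃
  · by_cases hb3 : b ∈ e₃
    · exact hne₃1 (sym2_eq_of_mem_mem ha3 hb3 hab)
    · have hx3 : x ∈ e₃ := m3.resolve_left hb3
      have hy3 : y ∈ e₃ := m4.resolve_left hb3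
      have he3xy : e₃ = s(x, y) := sym2_eq_of_mem_mem hx3 hy3 hxy
      exact hne₃2 he3xy
  · have hx3 : x ∈ e₃ := m1.resolve_left ha3
    have hy3 : y ∈ e₃ := m2.resolve_left ha3
    exact hne₃2 (sym2_eq_of_mem_mem hx3 hy3 hxy)
end

section
/- For any ℓ ≥ 1 and v ≥ ℓ − 1, there is a restricted edge-colored graph on v vertices with (ℓ−1)(v − ℓ/2) edges and no ℓ-matching; hence μ_ℓ(v) ≥ 1 + (ℓ−1)(v − ℓ/2). -/
private lemma aux_sum (k : ℕ) : ∀ m : ℕ,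
    ∑ i ∈ Finset.range k, (m + k - 1 - i) = k * m + k.choose 2 := by
  induction k with
  | zero => simp
  | succ n ih =>
    intro m
    rw [Finset.sum_range_succ]
    have h1 : ∑ i ∈ Finset.range n, (m + (n + 1) - 1 - i)
        = ∑ i ∈ Finset.range n, ((m + 1) + n - 1 - i) := by
      apply Finset.sum_congr rfl
      intro i _
      omega
    rw [h1, ih (m + 1)]
    have h2 : (n + 1).choose 2 = n.choose 2 + n := by
      rw [Nat.choose_succ_succ, Nat.choose_one_right]; exact add_comm _ _
    have h3 : m + (n + 1) - 1 - n = m := by omega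
    rw [h3]
    rw [h2]
    ring

theorem restricted_graph_no_matching (l v : ℕ) (hl : 1 ≤ l) (hv : l - 1 ≤ v) :
    ∃ (E : Finset (Sym2 (Fin v))) (c : Sym2 (Fin v) → ℕ),
      (∀ e ∈ E, ¬ e.IsDiag) ∧
      (∀ col : ℕ, (E.filter fun e => c e = col).card ≤ 3) ∧
      (∀ (x : Fin v) (col : ℕ), (E.filter fun e => c e = col ∧ x ∈ e).card ≤ 2) ∧
      E.card = Nat.choose (l - 1) 2 + (l - 1) * (v + 1 - l) ∧
      ¬ ∃ M : Finset (Sym2 (Fin v)), M ⊆ E ∧ M.card = l ∧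
          ∀ e₁ ∈ M, ∀ e₂ ∈ M, e₁ ≠ e₂ → ∀ x ∈ e₁, x ∉ e₂ := by
  classical
  set k := l - 1 with hk
  have hkv : k ≤ v := hv
  -- the edge set: non-diagonal pairs touching the first k vertices
  set E : Finset (Sym2 (Fin v)) :=
    Finset.univ.filter (fun e => ¬ e.IsDiag ∧ ∃ x ∈ e, (x : ℕ) < k) with hE
  -- a rainbow coloring
  obtain ⟨c, hc⟩ : ∃ c : Sym2 (Fin v) → ℕ, Function.Injective c :=
    ⟨fun e => ((Fintype.equivFin _) e : ℕ), fun a b h => by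
      exact (Fintype.equivFin _).injective (Fin.val_injective h)⟩
  refine ⟨E, c, ?_, ?_, ?_, ?_, ?_⟩
  · intro e he
    exact ((Finset.mem_filter.mp he).2).1
  · intro col
    have h1 : (E.filter fun e => c e = col).card ≤ 1 := by
      apply Finset.card_le_one.mpr
      intro a ha b hb
      exact hc ((Finset.mem_filter.mp ha).2.trans (Finset.mem_filter.mp hb).2.symm)
    omega
  · intro x col
    have h1 : (E.filter fun e => c e = col ∧ x ∈ e).card ≤ 1 := by
      apply Finset.card_le_one.mpr
      intro a ha b hb
      exact hc ((Finset.mem_filter.mp ha).2.1.trans (Finset.mem_filter.mp hb).2.1.symm)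
    omega
  · -- cardinality computation
    set A : Finset (Fin v) := Finset.univ.filter (fun x => (x : ℕ) < k) with hA
    have hEbij : E.card =
        (A.biUnion (fun a => (Finset.Ioi a).image (fun b => Sym2.mk a b))).card := by
      congr 1
      ext e
      induction e using Sym2.inductionOn with
      | _ a b =>
        simp only [hE, hA, Finset.mem_filter, Finset.mem_univ, true_and, Finset.mem_biUnion,
          Finset.mem_image, Finset.mem_Ioi]
        constructor
        · rintro ⟨hd, x, hx, hxk⟩
          rw [Sym2.mk_isDiag_iff] at hd
          rw [Sym2.mem_iff] at hx
          rcases lt_or_gt_of_ne hd with hab | hab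
          · refine ⟨a, ?_, b, hab, rfl⟩
            rcases hx with rfl | rfl
            · exact hxk
            · exact lt_trans (Fin.lt_def.mp hab) hxk
          · refine ⟨b, ?_, a, hab, Sym2.eq_swap⟩
            rcases hx with rfl | rfl
            · exact lt_trans (Fin.lt_def.mp hab) hxk
            · exact hxk
        · rintro ⟨x, hxk, y, hxy, he⟩
          rw [← he]
          refine ⟨?_, x, Sym2.mem_mk_left x y, hxk⟩
          rw [Sym2.mk_isDiag_iff]
          exact ne_of_lt hxy
    rw [hEbij, Finset.card_biUnion]
    · have hcard : ∀ a ∈ A, ((Finset.Ioi a).image (fun b => Sym2.mk a b)).card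
          = v - 1 - (a : ℕ) := by
        intro a _
        rw [Finset.card_image_of_injective _ (fun b₁ b₂ h => by
          simp only [Sym2.eq_iff] at h
          rcases h with ⟨-, h⟩ | ⟨h1, h2⟩
          · exact h
          · exact h2.trans h1), Fin.card_Ioi]
      rw [Finset.sum_congr rfl hcard]
      -- now compute ∑ a in A, (v - 1 - a)
      have himg : A.image (fun x : Fin v => (x : ℕ)) = Finset.range k := by
        ext i
        simp only [Finset.mem_image, hA, Finset.mem_filter, Finset.mem_univ, true_and,
          Finset.mem_range]
        constructor
        · rintro ⟨x, hx, rfl⟩; exact hx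
        · intro hi; exact ⟨⟨i, lt_of_lt_of_le hi hkv⟩, hi, rfl⟩
      have hsum : ∑ a ∈ A, (v - 1 - (a : ℕ)) = ∑ i ∈ Finset.range k, (v - 1 - i) := by
        rw [← himg, Finset.sum_image (fun x _ y _ h => Fin.val_injective h)]
      rw [hsum]
      have hre : ∑ i ∈ Finset.range k, (v - 1 - i)
          = ∑ i ∈ Finset.range k, ((v - k) + k - 1 - i) := by
        apply Finset.sum_congr rfl
        intro i hi
        rw [Finset.mem_range] at hi
        omega
      rw [hre, aux_sum k (v - k)]
      have hvl : v + 1 - l = v - k := by omega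
      rw [hvl]
      ring
    · -- pairwise disjoint
      intro a ha b hb hab
      simp only [Finset.disjoint_left, Finset.mem_image, Finset.mem_Ioi]
      rintro e ⟨x, hax, rfl⟩ ⟨y, hby, he⟩
      simp only [Sym2.eq_iff] at he
      rcases he with ⟨h1, -⟩ | ⟨h1, h2⟩
      · exact hab h1.symm
      · exact absurd (h1 ▸ hby) (lt_asymm (h2 ▸ hax))
  · -- no l-matching
    rintro ⟨M, hME, hMcard, hMdisj⟩
    set A : Finset (Fin v) := Finset.univ.filter (fun x => (x : ℕ) < k) with hA
    have hwit : ∀ e ∈ M, ∃ x ∈ e, (x : ℕ) < k := fun e he =>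
      ((Finset.mem_filter.mp (hME he)).2).2
    choose f hf1 hf2 using hwit
    have hM0 : M.Nonempty := Finset.card_pos.mp (by omega)
    obtain ⟨e0, he0⟩ := hM0
    have hv0 : Nonempty (Fin v) := ⟨f e0 he0⟩
    set g : Sym2 (Fin v) → Fin v := fun e => if h : e ∈ M then f e h else Classical.arbitrary _
      with hg
    have hcard : M.card ≤ A.card := by
      apply Finset.card_le_card_of_injOn g
      · intro e he
        have hge : g e = f e he := dif_pos he
        simp only [Finset.mem_coe, hge, hA, Finset.mem_filter, Finset.mem_univ, true_and]
        exact hf2 e he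
      · intro e1 h1 e2 h2 heq
        by_contra hne
        have he1 : g e1 = f e1 h1 := dif_pos h1
        have he2 : g e2 = f e2 h2 := dif_pos h2
        rw [he1, he2] at heq
        exact hMdisj e1 h1 e2 h2 hne (f e1 h1) (hf1 e1 h1) (heq ▸ hf1 e2 h2)
    have hAcard : A.card ≤ k := by
      have h1 : A.card = (A.image (fun x : Fin v => (x : ℕ))).card :=
        (Finset.card_image_of_injective _ Fin.val_injective).symm
      have h2 : A.image (fun x : Fin v => (x : ℕ)) ⊆ Finset.range k := by
        intro i hi
        simp only [Finset.mem_image, hA, Finset.mem_filter] at hi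
        obtain ⟨x, ⟨-, hx⟩, rfl⟩ := hi
        exact Finset.mem_range.mpr hx
      calc A.card = _ := h1
        _ ≤ (Finset.range k).card := Finset.card_le_card h2
        _ = k := Finset.card_range k
    omega
end

section
/- Let G(∘), G(∗) be groups on a finite set G with U ⊆ diff(∘,∗). Define a multigraph on the vertex set G∖K whose edges are the pairs {b, a∘b} for (a,b) ∈ U with a ∈ K, b ∉ K, a∘b ∉ K, colored by a. Then between any two vertices there are at most two edges, and at most two distinct edges of any fixed color a are incident to any given vertex. -/
theorem gammaU_restricted {G : Type*} [Fintype G] [DecidableEq G] (S T : Group G)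
    (U : Finset (G × G))
    (hU : ∀ p ∈ U, mulOf S p.1 p.2 ≠ mulOf T p.1 p.2 ∧
      3 * rowDist S T p.1 < Fintype.card G ∧
      ¬ 3 * rowDist S T p.2 < Fintype.card G ∧
      ¬ 3 * rowDist S T (mulOf S p.1 p.2) < Fintype.card G) :
    (∀ x y : G, (U.filter fun p => s(p.2, mulOf S p.1 p.2) = s(x, y)).card ≤ 2) ∧
    (∀ a x : G,
      (((U.filter fun p => p.1 = a).image fun p => s(p.2, mulOf S p.1 p.2)).filter
        fun e => x ∈ e).card ≤ 2) := by
  letI : Group G := S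
  have hmul : ∀ a b : G, mulOf S a b = a * b := fun _ _ => rfl
  constructor
  · intro x y
    by_cases h : (U.filter fun p => s(p.2, mulOf S p.1 p.2) = s(x, y)).Nonempty
    · obtain ⟨⟨a, b⟩, hab⟩ := h
      simp only [Finset.mem_filter] at hab
      have hsub : (U.filter fun p => s(p.2, mulOf S p.1 p.2) = s(x, y)) ⊆
          {(a, b), (a⁻¹, a * b)} := by
        intro ⟨c, d⟩ hcd
        simp only [Finset.mem_filter] at hcd
        have key : s(d, c * d) = s(b, a * b) := by
          rw [← hmul, ← hmul]; exact hcd.2.trans hab.2.symm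
        rw [Sym2.eq_iff] at key
        rcases key with ⟨h1, h2⟩ | ⟨h1, h2⟩
        · subst h1
          have : c = a := mul_right_cancel h2
          subst this
          simp
        · subst h1
          have hc : c = a⁻¹ := by
            apply mul_right_cancel (b := a * b)
            rw [h2, inv_mul_cancel_left]
          subst hc
          simp
      calc (U.filter fun p => s(p.2, mulOf S p.1 p.2) = s(x, y)).card
          ≤ ({(a, b), (a⁻¹, a * b)} : Finset (G × G)).card := Finset.card_le_card hsub
        _ ≤ 2 := by
            refine (Finset.card_insert_le _ _).trans ?_
            simp
    · rw [Finset.not_nonempty_iff_eq_empty] at h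
      rw [h]
      simp
  · intro a x
    have hsub : (((U.filter fun p => p.1 = a).image fun p => s(p.2, mulOf S p.1 p.2)).filter
        fun e => x ∈ e) ⊆ {s(x, a * x), s(a⁻¹ * x, x)} := by
      intro e he
      simp only [Finset.mem_filter, Finset.mem_image] at he
      obtain ⟨⟨p, hp, hpe⟩, hx⟩ := he
      obtain ⟨hpU, hpa⟩ := hp
      subst hpe
      rw [hmul, hpa] at hx ⊢
      rw [Sym2.mem_iff] at hx
      rcases hx with h1 | h1
      · rw [← h1]
        simp
      · have h2 : p.2 = a⁻¹ * x := by rw [h1, inv_mul_cancel_left]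
        rw [h2, h1, h2]
        simp [mul_inv_cancel_left]
    calc _ ≤ ({s(x, a * x), s(a⁻¹ * x, x)} : Finset (Sym2 G)).card :=
          Finset.card_le_card hsub
      _ ≤ 2 := by
          refine (Finset.card_insert_le _ _).trans ?_
          simp
end

section
/- Let G(∘), G(∗) be groups on a finite set G of size n with K = {a : dist_a < n/3} and let U = {(a,b) ∈ diff(∘,∗) : a ∈ K, b ∉ K, a∘b ∉ K}. Then |U| ≤ (n−k)(n−k−1), where k = |K|. -/
theorem U_card_bound {G : Type*} [Fintype G] [DecidableEq G] (S T : Group G)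
    (k : ℕ) (hk : k = (Finset.univ.filter fun a : G =>
      3 * rowDist S T a < Fintype.card G).card) :
    (Finset.univ.filter fun p : G × G =>
        mulOf S p.1 p.2 ≠ mulOf T p.1 p.2 ∧
        3 * rowDist S T p.1 < Fintype.card G ∧
        ¬ 3 * rowDist S T p.2 < Fintype.card G ∧
        ¬ 3 * rowDist S T (mulOf S p.1 p.2) < Fintype.card G).card
      ≤ (Fintype.card G - k) * (Fintype.card G - k - 1) := by
  classical
  set n := Fintype.card G with hn
  set C : Finset G := Finset.univ.filter fun a : G => ¬ 3 * rowDist S T a < n with hC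
  have hCcard : C.card = n - k := by
    rw [hC, Finset.filter_not, Finset.card_sdiff_of_subset (Finset.filter_subset _ _),
      Finset.card_univ, hk]
  have hnpos : 0 < n := by
    have : Nonempty G := ⟨letI := S; (1 : G)⟩
    simpa [hn] using Fintype.card_pos
  -- the injection (a,b) ↦ (b, a∘b) into offDiag C
  have hsub : (Finset.univ.filter fun p : G × G =>
        mulOf S p.1 p.2 ≠ mulOf T p.1 p.2 ∧
        3 * rowDist S T p.1 < n ∧
        ¬ 3 * rowDist S T p.2 < n ∧
        ¬ 3 * rowDist S T (mulOf S p.1 p.2) < n).card ≤ C.offDiag.card := by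
    apply Finset.card_le_card_of_injOn (fun p => (p.2, mulOf S p.1 p.2))
    · intro p hp
      simp only [Finset.mem_coe, Finset.mem_filter, Finset.mem_univ, true_and] at hp
      obtain ⟨hdiff, haK, hbC, habC⟩ := hp
      have hb : p.2 ∈ C := by
        simp only [hC, Finset.mem_filter, Finset.mem_univ, true_and]; exact hbC
      have hab : mulOf S p.1 p.2 ∈ C := by
        simp only [hC, Finset.mem_filter, Finset.mem_univ, true_and]; exact habC
      rw [Finset.mem_coe, Finset.mem_offDiag]
      refine ⟨hb, hab, ?_⟩
      -- show p.2 ≠ mulOf S p.1 p.2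
      intro heq'
      have heq : p.2 = mulOf S p.1 p.2 := heq'
      -- then p.1 is the identity of S
      have ha1 : p.1 = (letI := S; (1 : G)) := by
        letI := S
        have : p.1 * p.2 = 1 * p.2 := by
          simpa [mulOf, one_mul] using heq.symm
        exact mul_right_cancel this
      by_cases hfix : ∃ y : G, mulOf T p.1 y = y
      · -- then p.1 is also identity of T, contradicting hdiff
        obtain ⟨y, hy⟩ := hfix
        have h1T : p.1 = (letI := T; (1 : G)) := by
          letI := T
          have : p.1 * y = 1 * y := by simpa [mulOf, one_mul] using hy
          exact mul_right_cancel this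
        apply hdiff
        rw [← heq]
        letI := T
        simp [mulOf, h1T, one_mul]
      · -- then rowDist S T p.1 = n, contradicting haK
        push_neg at hfix
        have hrow : rowDist S T p.1 = n := by
          rw [rowDist]
          have : (Finset.univ.filter fun b : G =>
              mulOf S p.1 b ≠ mulOf T p.1 b) = Finset.univ := by
            apply Finset.filter_true_of_mem
            intro b _
            have hSb : mulOf S p.1 b = b := by
              letI := S; simp [mulOf, ha1, one_mul]
            rw [hSb]
            exact fun h => hfix b h.symm
          rw [this, Finset.card_univ]
        rw [hrow] at haK
        omega
    · intro p hp q hq hpq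
      simp only [Prod.mk.injEq] at hpq
      obtain ⟨h2, h12⟩ := hpq
      have h1 : p.1 = q.1 := by
        letI := S
        rw [h2] at h12
        have h12' : p.1 * q.2 = q.1 * q.2 := h12
        exact mul_right_cancel h12'
      exact Prod.ext h1 h2
  have hoff : C.offDiag.card = (n - k) * (n - k - 1) := by
    rw [Finset.offDiag_card, hCcard]
    rw [Nat.sub_one, Nat.mul_pred]
  calc _ ≤ C.offDiag.card := hsub
    _ = _ := hoff
end
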